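/- The rescaled discrete q-Hermite polynomials II, defined by h_{n+1}(x,s;q) = q^n·x·h_n(x,s;q) − [n]_q·s·h_{n−1}(x,s;q) with h_0 = 1, h_{−1} = 0, have the explicit formula h_n(x,s;q) = Σ_{k=0}^{⌊n/2⌋} q^{C(n−2k,2)}·qbinom(n,2k)·[2k−1]_q!!·(−s)^k·x^{n−2k}. -/

import Mathlib

open Polynomial

noncomputable section

abbrev Kq : Type := RatFunc ℚ
def q : Kq := RatFunc.X
abbrev Ks : Type := Polynomial Kq
abbrev Ax : Type := Polynomial Ks
def qInt (n : ℕ) : Kq := ∑ i ∈ Finset.range n, q ^ i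
/-- The q-factorial `[n]_q!`. -/
def qFact (n : ℕ) : Kq := ∏ i ∈ Finset.range n, qInt (i + 1)
/-- The Gaussian binomial coefficient. -/
def qChoose (n k : ℕ) : Kq := qFact n / (qFact k * qFact (n - k))
/-- The odd q-double factorial `[2k−1]_q!! = ∏_{i=1}^k [2i−1]_q`. -/
def qOddDFact (k : ℕ) : Kq := ∏ i ∈ Finset.range k, qInt (2 * i + 1)

lemma qInt_add (a b : ℕ) : qInt (a+b) = qInt a + q^a * qInt b := by
  simp [qInt, Finset.sum_range_add, pow_add, Finset.mul_sum]

lemma qInt_ne_zero (n : ℕ) : qInt (n+1) ≠ 0 := by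
  have : qInt (n+1) = algebraMap (Polynomial ℚ) Kq (∑ i ∈ Finset.range (n+1), Polynomial.X ^ i) := by
    simp [qInt, q, map_sum, map_pow, RatFunc.algebraMap_X]
  rw [this]
  apply RatFunc.algebraMap_ne_zero
  intro hp
  have := congrArg (Polynomial.eval 1) hp
  simp at this; have h2 : (0:ℚ) ≤ n := Nat.cast_nonneg n; linarith

lemma qFact_ne_zero (n : ℕ) : qFact n ≠ 0 := by
  apply Finset.prod_ne_zero_iff.mpr
  intro i _
  exact qInt_ne_zero i

lemma qFact_succ (n : ℕ) : qFact (n+1) = qFact n * qInt (n+1) := Finset.prod_range_succ _ _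
lemma qOddDFact_succ (k : ℕ) : qOddDFact (k+1) = qOddDFact k * qInt (2*k+1) := Finset.prod_range_succ _ _
lemma qFact_zero : qFact 0 = 1 := Finset.prod_range_zero _
lemma qOddDFact_zero : qOddDFact 0 = 1 := Finset.prod_range_zero _

lemma choose2 (n : ℕ) : (n+1).choose 2 = n.choose 2 + n := by
  rw [Nat.choose_succ_succ n 1, Nat.choose_one_right]
  simp [Nat.add_comm]

lemma qChoose_zero (n : ℕ) : qChoose n 0 = 1 := by
  simp [qChoose, qFact_zero, div_self (qFact_ne_zero n)]

lemma qChoose_self (n : ℕ) : qChoose n n = 1 := by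
  simp [qChoose, qFact_zero, div_self (qFact_ne_zero n)]

def aCoef (n k : ℕ) : Kq := q ^ ((n - 2*k).choose 2) * qChoose n (2*k) * qOddDFact k

lemma azero (n : ℕ) : aCoef (n+1) 0 = q^n * aCoef n 0 := by
  simp only [aCoef, Nat.mul_zero, Nat.sub_zero, qChoose_zero, qOddDFact_zero, mul_one]
  rw [choose2]
  ring

lemma atop (m : ℕ) : aCoef (2*m+2) (m+1) = qInt (2*m+1) * aCoef (2*m) m := by
  simp only [aCoef]
  rw [show 2*m+2 - 2*(m+1) = 0 from by omega, show 2*m - 2*m = 0 from by omega,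
    show 2*(m+1) = 2*m+2 from by ring, qChoose_self, show 2*m = 2*m from rfl]
  rw [show qChoose (2*m) (2*m) = 1 from qChoose_self _, qOddDFact_succ]
  ring

lemma akey (m j : ℕ) : aCoef (m+2*j+3) (j+1)
    = q^(m+2*j+2) * aCoef (m+2*j+2) (j+1) + qInt (m+2*j+2) * aCoef (m+2*j+1) j := by
  simp only [aCoef, qChoose]
  rw [show m+2*j+3 - 2*(j+1) = m+1 from by omega, show m+2*j+2 - 2*(j+1) = m from by omega,
      show m+2*j+1 - 2*j = m+1 from by omega,
      show 2*(j+1) = 2*j+1+1 from by ring]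
  rw [show m+2*j+3 = (m+2*j+2)+1 from by ring, qFact_succ (m+2*j+2),
      show m+2*j+2 = (m+2*j+1)+1 from by ring, qFact_succ (m+2*j+1),
      qFact_succ (2*j+1), show 2*j+1 = 2*j+1 from rfl, qFact_succ (2*j),
      qFact_succ m, qOddDFact_succ j,
      choose2 m,
      show qInt (m+2*j+1+1+1) = qInt (2*j+2) + q^(2*j+2) * qInt (m+1) from by
        rw [← qInt_add]; ring_nf,
      show qInt (2*j+1+1) = qInt (2*j+2) from by norm_num]
  have h1 : qFact (2*j) ≠ 0 := qFact_ne_zero _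
  have h2 : qFact m ≠ 0 := qFact_ne_zero _
  have h3 : qInt (2*j+1) ≠ 0 := qInt_ne_zero _
  have h4 : qInt (2*j+2) ≠ 0 := qInt_ne_zero (2*j+1)
  have h5 : qInt (m+1) ≠ 0 := qInt_ne_zero _
  have h1' : qFact (j*2) ≠ 0 := by rwa [show j*2 = 2*j from by ring]
  have h3' : qInt (1+j*2) ≠ 0 := by rwa [show 1+j*2 = 2*j+1 from by ring]
  have h4' : qInt (2+j*2) ≠ 0 := by rwa [show 2+j*2 = 2*j+2 from by ring]
  have h5' : qInt (1+m) ≠ 0 := by rwa [show 1+m = m+1 from by ring]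
  field_simp [h1, h2, h3, h4, h5, h1', h3', h4', h5']
  ring

lemma akey' (n k : ℕ) (hk : 2*k+2 ≤ n) :
    aCoef (n+1) (k+1) = q^n * aCoef n (k+1) + qInt n * aCoef (n-1) k := by
  obtain ⟨m, rfl⟩ : ∃ m, n = m + 2*k + 2 := ⟨n - (2*k+2), by omega⟩
  exact akey m k

lemma aCoef_zero_zero : aCoef 0 0 = 1 := by
  simp [aCoef, qChoose_zero, qOddDFact_zero]

lemma aCoef_one_zero : aCoef 1 0 = 1 := by
  simp [aCoef, qChoose_zero, qOddDFact_zero]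

def T (n k : ℕ) : Ax :=
  Polynomial.C (Polynomial.C (aCoef n k) * (-Polynomial.X : Ks) ^ k) * X ^ (n - 2*k)

def g (n : ℕ) : Ax := ∑ k ∈ Finset.range (n / 2 + 1), T n k

lemma Tstep (n k : ℕ) (hk : 2*k+2 ≤ n) :
    T (n+1) (k+1) = Polynomial.C (Polynomial.C (q^n)) * X * T n (k+1)
      - Polynomial.C (Polynomial.C (qInt n) * Polynomial.X) * T (n-1) k := by
  unfold T
  rw [show n+1-2*(k+1) = (n-2*k-2)+1 from by omega, show n-2*(k+1) = n-2*k-2 from by omega,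
      show n-1-2*k = (n-2*k-2)+1 from by omega, akey' n k hk]
  simp only [map_add, map_mul, map_pow, map_neg, add_mul]
  ring

lemma Tzero (n : ℕ) : T (n+1) 0 = Polynomial.C (Polynomial.C (q^n)) * X * T n 0 := by
  unfold T
  rw [show n+1-2*0 = (n-2*0)+1 from by omega, azero n]
  simp only [map_mul, pow_zero, mul_one]
  ring

lemma Ttop (m : ℕ) : T (2*m+2) (m+1)
    = - (Polynomial.C (Polynomial.C (qInt (2*m+1)) * Polynomial.X) * T (2*m) m) := by
  unfold T
  rw [show 2*m+2-2*(m+1) = 0 from by omega, show 2*m-2*m = 0 from by omega, atop m]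
  simp only [map_mul, map_pow, map_neg, pow_zero, mul_one]
  ring

lemma grec (n : ℕ) : g (n+1) = Polynomial.C (Polynomial.C (q^n)) * X * g n
    - Polynomial.C (Polynomial.C (qInt n) * Polynomial.X) * g (n-1) := by
  obtain ⟨m, rfl | rfl⟩ := Nat.even_or_odd' n
  · -- n = 2*m even
    match m with
    | 0 =>
      have h0 : qInt 0 = 0 := by simp [qInt]
      norm_num [h0]
      show g 1 = _ * g 0
      unfold g
      norm_num [Finset.sum_range_one]
      have := Tzero 0
      norm_num at this
      exact this
    | (m+1 : ℕ) =>
      unfold g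
      rw [show (2*(m+1)+1)/2+1 = m+2 from by omega, show (2*(m+1))/2+1 = m+2 from by omega,
          show (2*(m+1)-1)/2+1 = m+1 from by omega]
      rw [Finset.sum_range_succ' (fun k => T (2*(m+1)+1) k) (m+1),
          Finset.mul_sum, Finset.mul_sum,
          Finset.sum_range_succ' (fun k => Polynomial.C (Polynomial.C (q^(2*(m+1)))) * X * T (2*(m+1)) k) (m+1)]
      have hstep : ∀ i ∈ Finset.range (m+1), T (2*(m+1)+1) (i+1)
          = Polynomial.C (Polynomial.C (q^(2*(m+1)))) * X * T (2*(m+1)) (i+1)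
            - Polynomial.C (Polynomial.C (qInt (2*(m+1))) * Polynomial.X) * T (2*(m+1)-1) i := by
        intro i hi
        simp only [Finset.mem_range] at hi
        exact Tstep (2*(m+1)) i (by omega)
      rw [Finset.sum_congr rfl hstep, Finset.sum_sub_distrib]
      have hzero : T (2*(m+1)+1) 0 = Polynomial.C (Polynomial.C (q^(2*(m+1)))) * X * T (2*(m+1)) 0 :=
        Tzero (2*(m+1))
      rw [hzero]
      abel
  · -- n = 2*m+1 odd
    unfold g
    rw [show (2*m+1+1)/2+1 = m+2 from by omega, show (2*m+1)/2+1 = m+1 from by omega,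
        show (2*m+1-1)/2+1 = m+1 from by omega]
    rw [Finset.sum_range_succ' (fun k => T (2*m+1+1) k) (m+1),
        Finset.sum_range_succ (fun i => T (2*m+1+1) (i+1)) m,
        Finset.mul_sum, Finset.mul_sum,
        Finset.sum_range_succ' (fun k => Polynomial.C (Polynomial.C (q^(2*m+1))) * X * T (2*m+1) k) m,
        Finset.sum_range_succ (fun j => Polynomial.C (Polynomial.C (qInt (2*m+1)) * Polynomial.X) * T (2*m+1-1) j) m]
    have hstep : ∀ i ∈ Finset.range m, T (2*m+1+1) (i+1)
        = Polynomial.C (Polynomial.C (q^(2*m+1))) * X * T (2*m+1) (i+1)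
          - Polynomial.C (Polynomial.C (qInt (2*m+1)) * Polynomial.X) * T (2*m+1-1) i := by
      intro i hi
      simp only [Finset.mem_range] at hi
      exact Tstep (2*m+1) i (by omega)
    rw [Finset.sum_congr rfl hstep, Finset.sum_sub_distrib]
    have htop : T (2*m+1+1) (m+1)
        = - (Polynomial.C (Polynomial.C (qInt (2*m+1)) * Polynomial.X) * T (2*m+1-1) m) := Ttop m
    have hzero : T (2*m+1+1) 0 = Polynomial.C (Polynomial.C (q^(2*m+1))) * X * T (2*m+1) 0 :=
      Tzero (2*m+1)
    rw [htop, hzero]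
    abel
/-- The rescaled discrete q-Hermite polynomials II, defined by
`h_0 = 1` and `h_{n+1} = q^n·x·h_n − [n]_q·s·h_{n−1}`, satisfy
`h_n(x,s;q) = Σ_{k=0}^{⌊n/2⌋} q^{C(n−2k,2)}·qbinom(n,2k)·[2k−1]_q!!·(−s)^k·x^{n−2k}`. -/
theorem discrete_qHermite_explicit (h : ℕ → Ax)
    (h0 : h 0 = 1)
    (hrec : ∀ n : ℕ, h (n + 1) =
      Polynomial.C (Polynomial.C (q ^ n)) * X * h n -
        Polynomial.C (Polynomial.C (qInt n) * Polynomial.X) * h (n - 1)) :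
    ∀ n : ℕ, h n = ∑ k ∈ Finset.range (n / 2 + 1),
      Polynomial.C (Polynomial.C (q ^ ((n - 2 * k).choose 2) * qChoose n (2 * k) * qOddDFact k) *
        (-Polynomial.X : Ks) ^ k) * X ^ (n - 2 * k) := by
  have main : ∀ n : ℕ, h n = g n ∧ h (n+1) = g (n+1) := by
    intro n
    induction n with
    | zero =>
      have hg0 : g 0 = 1 := by
        simp [g, Finset.sum_range_one, T, aCoef_zero_zero]
      have hg1 : g 1 = (X : Ax) := by
        simp [g, Finset.sum_range_one, T, aCoef_one_zero]
      refine ⟨by rw [h0, hg0], ?_⟩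
      rw [hrec 0, h0, hg1]
      have hq0 : qInt 0 = 0 := by simp [qInt]
      simp [hq0]
    | succ n ih =>
      refine ⟨ih.2, ?_⟩
      rw [hrec (n+1), show n+1-1 = n from rfl, ih.1, ih.2]
      have hg := grec (n+1)
      rw [show n+1-1 = n from rfl] at hg
      exact hg.symm
  intro n
  rw [(main n).1]
  unfold g T aCoef
  rfl

end
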